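/- arXiv:2405.12655 — 2 statements merged into one kernel-verified Lean document; each statement's English description precedes it below -/
import Mathlib

section
/- Suppose f : E → ℝ is locally Lipschitz and is a strong C² max function at x̄ with data f₁, …, f_n. Then there exists δ > 0 such that for every point x of the active manifold M with ‖x − x̄‖ ≤ δ, the following holds: letting T(x) := {v ∈ E : ⟨v, ∇f_i(x) − ∇f_j(x)⟩ = 0 for all i, j} the orthogonal projection of ∇f_i(x) onto T(x) is the same vector p for every index i, this vector p belongs to convexHull{∇f_i(x) : 1 ≤ i ≤ n}, and p is the unique element of minimal norm of convexHull{∇f_i(x) : 1 ≤ i ≤ n} (i.e. p = p(x)). (The vector p is the Riemannian gradient of the restriction of f to M at x.) -/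
open Filter Topology Metric Set
open scoped Classical

variable {E : Type*} [NormedAddCommGroup E] [InnerProductSpace ℝ E] [FiniteDimensional ℝ E]

/-- The Clarke subdifferential: the closed convex hull of all limits of gradients
along sequences of points of differentiability converging to `x`. -/
noncomputable def clarkeSubdiff (f : E → ℝ) (x : E) : Set E :=
  closure (convexHull ℝ {v : E | ∃ u : ℕ → E,
    (∀ n, DifferentiableAt ℝ f (u n)) ∧
    Tendsto u atTop (𝓝 x) ∧
    Tendsto (fun n => gradient f (u n)) atTop (𝓝 v)})

/-- The Goldstein subdifferential of radius `ε`. -/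
noncomputable def goldsteinSubdiff (f : E → ℝ) (x : E) (ε : ℝ) : Set E :=
  convexHull ℝ (⋃ y ∈ Metric.closedBall x ε, clarkeSubdiff f y)

/-- The element of minimal norm of a set (junk value `0` if no minimizer exists). -/
noncomputable def minNorm (s : Set E) : E :=
  if h : ∃ v, v ∈ s ∧ ∀ w ∈ s, ‖v‖ ≤ ‖w‖ then h.choose else 0

/-- The Goldstein subgradient: the minimal-norm element of the Goldstein subdifferential. -/
noncomputable def goldsteinGrad (f : E → ℝ) (x : E) (ε : ℝ) : E :=
  minNorm (goldsteinSubdiff f x ε)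

/-- The Goldstein modulus `Γf(x) = inf {ε ≥ 0 : ‖g_ε(x)‖ ≤ ε}`. -/
noncomputable def goldsteinModulus (f : E → ℝ) (x : E) : ℝ :=
  sInf {ε : ℝ | 0 ≤ ε ∧ ‖goldsteinGrad f x ε‖ ≤ ε}

open scoped RealInnerProductSpace

/-- `f` is a strong `C²` max function at `xbar` with data `F 0, …, F n`. -/
def IsStrongC2MaxAt (f : E → ℝ) (xbar : E) {n : ℕ} (F : Fin (n + 1) → E → ℝ) : Prop :=
  (∀ i, ContDiff ℝ 2 (F i)) ∧
  (∃ ρ > 0, ∀ x : E, ‖x - xbar‖ ≤ ρ →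
      f x = Finset.univ.sup' Finset.univ_nonempty (fun i => F i x)) ∧
  (∀ i j, F i xbar = F j xbar) ∧
  AffineIndependent ℝ (fun i => gradient (F i) xbar) ∧
  (0 : E) ∈ intrinsicInterior ℝ (convexHull ℝ (Set.range fun i => gradient (F i) xbar)) ∧
  (∃ δ > 0, ∃ ρ' > 0, ∀ x : E, ‖x - xbar‖ ≤ ρ' → f x - f xbar ≥ δ / 2 * ‖x - xbar‖ ^ 2)

/-- The subspace `T(x)` orthogonal to all the gradient differences. -/
noncomputable def tangentSpaceOf {m : ℕ} (g : Fin m → E) : Submodule ℝ E where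
  carrier := {v : E | ∀ i j, ⟪v, g i - g j⟫ = 0}
  add_mem' := by
    intro a b ha hb i j
    rw [inner_add_left, ha i j, hb i j, add_zero]
  zero_mem' := by
    intro i j
    exact inner_zero_left _
  smul_mem' := by
    intro c a ha i j
    rw [real_inner_smul_left, ha i j, mul_zero]


lemma convexHull_range_coords {m : ℕ} (v : Fin m → E) {x : E}
    (hx : x ∈ convexHull ℝ (Set.range v)) :
    ∃ c : Fin m → ℝ, (∀ i, 0 ≤ c i) ∧ ∑ i, c i = 1 ∧ ∑ i, c i • v i = x := by
  obtain ⟨ι, _, w, z, hw0, hw1, hz, hxe⟩ := mem_convexHull_iff_exists_fintype.1 hx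
  choose k hk using fun i => (Set.mem_range.1 (hz i))
  refine ⟨fun j => ∑ i ∈ Finset.univ.filter (fun i => k i = j), w i, fun j =>
    Finset.sum_nonneg fun i _ => hw0 i, ?_, ?_⟩
  · rw [Finset.sum_fiberwise Finset.univ k w, hw1]
  · calc ∑ j, (∑ i ∈ Finset.univ.filter (fun i => k i = j), w i) • v j
        = ∑ j, ∑ i ∈ Finset.univ.filter (fun i => k i = j), w i • z i := by
          refine Finset.sum_congr rfl fun j _ => ?_
          rw [Finset.sum_smul]
          refine Finset.sum_congr rfl fun i hi => ?_
          rw [← hk i, (Finset.mem_filter.1 hi).2]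
      _ = ∑ i, w i • z i := Finset.sum_fiberwise _ _ _
      _ = x := hxe

lemma coords_unique {m : ℕ} {v : Fin m → E} (hv : AffineIndependent ℝ v)
    {c c' : Fin m → ℝ} (hc : ∑ i, c i = 1) (hc' : ∑ i, c' i = 1)
    (h : ∑ i, c i • v i = ∑ i, c' i • v i) : c = c' := by
  refine (affineIndependent_iff_eq_of_fintype_affineCombination_eq ℝ v).1 hv c c' hc hc' ?_
  rw [Finset.univ.affineCombination_eq_linear_combination v c hc,
    Finset.univ.affineCombination_eq_linear_combination v c' hc', h]

lemma pos_coords_of_mem_intrinsicInterior {m : ℕ} {v : Fin m → E}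
    (hv : AffineIndependent ℝ v)
    (h0 : (0:E) ∈ intrinsicInterior ℝ (convexHull ℝ (Set.range v))) :
    ∃ c : Fin m → ℝ, (∀ i, 0 < c i) ∧ ∑ i, c i = 1 ∧ ∑ i, c i • v i = 0 := by
  have h0C : (0:E) ∈ convexHull ℝ (Set.range v) := intrinsicInterior_subset h0
  obtain ⟨c, hc0, hc1, hcv⟩ := convexHull_range_coords v h0C
  refine ⟨c, fun k => ?_, hc1, hcv⟩
  obtain ⟨z, hzint, hz0⟩ := h0
  obtain ⟨ε, hε, hball⟩ := Metric.mem_nhds_iff.1 (mem_interior_iff_mem_nhds.1 hzint)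
  set t : ℝ := ε / (2 * (‖v k‖ + 1)) with ht
  have hnorm : 0 < ‖v k‖ + 1 := by positivity
  have ht0 : 0 < t := by positivity
  have hvk_span : v k ∈ affineSpan ℝ (convexHull ℝ (Set.range v)) := by
    rw [affineSpan_convexHull]
    exact subset_affineSpan ℝ _ (Set.mem_range_self k)
  have h0_span : (0:E) ∈ affineSpan ℝ (convexHull ℝ (Set.range v)) :=
    subset_affineSpan ℝ _ h0C
  have hmem : -(t • v k) ∈ affineSpan ℝ (convexHull ℝ (Set.range v)) := by
    have := AffineSubspace.smul_vsub_vadd_mem _ (-t) hvk_span h0_span h0_span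
    simpa using this
  have hin : (⟨-(t • v k), hmem⟩ : affineSpan ℝ (convexHull ℝ (Set.range v))) ∈
      Metric.ball z ε := by
    rw [Metric.mem_ball, Subtype.dist_eq, hz0, dist_eq_norm, sub_zero, norm_neg, norm_smul,
      Real.norm_eq_abs, abs_of_pos ht0, ht]
    calc ε / (2 * (‖v k‖ + 1)) * ‖v k‖ ≤ ε / 2 := by
          rw [div_mul_eq_mul_div, div_le_div_iff₀ (by positivity) (by norm_num)]
          nlinarith [norm_nonneg (v k)]
      _ < ε := by linarith
  have hC : -(t • v k) ∈ convexHull ℝ (Set.range v) := hball hin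
  obtain ⟨b, hb0, hb1, hbv⟩ := convexHull_range_coords v hC
  set c' : Fin m → ℝ := fun i => (b i + if i = k then t else 0) / (1 + t) with hc'
  have hsum' : ∑ i, c' i = 1 := by
    simp only [hc', Finset.sum_div, ← Finset.sum_add_distrib]
    rw [← Finset.sum_div, Finset.sum_add_distrib, hb1, Finset.sum_ite_eq' Finset.univ k
      (fun _ => t)]
    simp [div_self (by positivity : (1:ℝ) + t ≠ 0)]
  have hvec' : ∑ i, c' i • v i = 0 := by
    calc ∑ i, c' i • v i
        = ∑ i, (1 + t)⁻¹ • (b i • v i + if i = k then t • v i else 0) := by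
          refine Finset.sum_congr rfl fun i _ => ?_
          simp only [hc']
          rw [div_eq_inv_mul, mul_smul, add_smul, ite_smul, zero_smul]
      _ = (1 + t)⁻¹ • ∑ i, (b i • v i + if i = k then t • v i else 0) :=
          (Finset.smul_sum).symm
      _ = (1 + t)⁻¹ • (∑ i, b i • v i + t • v k) := by
          rw [Finset.sum_add_distrib, Finset.sum_ite_eq' Finset.univ k fun i => t • v i]
          simp
      _ = 0 := by rw [hbv]; simp
  have := coords_unique hv hc1 hsum' (hcv.trans hvec'.symm)
  have hk' : c k = c' k := congrFun this k
  rw [hk']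
  have hck : c' k = (b k + t) / (1 + t) := by simp [hc']
  rw [hck]
  exact div_pos (by linarith [hb0 k]) (by linarith)

lemma key {n : ℕ} (v : E → Fin (n + 1) → E) (hvc : ∀ i, Continuous fun x => v x i)
    (xbar : E) (hindep : AffineIndependent ℝ (v xbar))
    (hrelint : (0 : E) ∈ intrinsicInterior ℝ (convexHull ℝ (Set.range (v xbar)))) :
    ∃ δ > 0, ∀ x : E, ‖x - xbar‖ ≤ δ →
      ∃ lam : Fin (n + 1) → ℝ, (∀ k, 0 < lam k) ∧ (∑ i, lam i) = 1 ∧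
        ∀ k, ⟪∑ i, lam i • v x i, v x k - v x 0⟫ = 0 := by
  classical
  set d : E → Fin n → E := fun x j => v x j.succ - v x 0 with hd
  set G : E → Matrix (Fin n) (Fin n) ℝ := fun x => Matrix.of fun i j => ⟪d x i, d x j⟫ with hG
  set bb : E → Fin n → ℝ := fun x j => -⟪v x 0, d x j⟫ with hbb
  set μ : E → Fin n → ℝ := fun x => ((G x).det)⁻¹ • ((G x).adjugate.mulVec (bb x)) with hμ
  set lam : E → Fin (n + 1) → ℝ := fun x => Fin.cons (1 - ∑ j, μ x j) (μ x) with hlam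
  have hlamsum : ∀ x, ∑ i, lam x i = 1 := by
    intro x
    simp [hlam, Fin.sum_univ_succ]
  have hlamsucc : ∀ (x : E) (j : Fin n), lam x j.succ = μ x j := fun x j => by simp [hlam]
  have hrepr : ∀ (c : Fin (n + 1) → ℝ) (x : E), ∑ i, c i = 1 →
      ∑ i, c i • v x i = v x 0 + ∑ j, c j.succ • d x j := by
    intro c x hc
    have h1 : ∀ j : Fin n, c j.succ • v x j.succ = c j.succ • d x j + c j.succ • v x 0 := by
      intro j
      rw [← smul_add, hd]
      simp
    rw [Fin.sum_univ_succ, Finset.sum_congr rfl fun j _ => h1 j, Finset.sum_add_distrib,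
      ← Finset.sum_smul]
    have h2 : ∑ j : Fin n, c j.succ = 1 - c 0 := by
      rw [Fin.sum_univ_succ] at hc; linarith
    rw [h2, sub_smul, one_smul]
    abel
  have hdot : ∀ (x : E) (c : Fin n → ℝ),
      dotProduct c ((G x).mulVec c) = ⟪∑ j, c j • d x j, ∑ j, c j • d x j⟫ := by
    intro x c
    rw [sum_inner]
    simp only [dotProduct, Matrix.mulVec, Matrix.of_apply, real_inner_smul_left, inner_sum,
      real_inner_smul_right, Finset.mul_sum, hG]
    exact Finset.sum_congr rfl fun i _ => Finset.sum_congr rfl fun j _ => by ring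
  have hdind : ∀ c : Fin n → ℝ, ∑ j, c j • d xbar j = 0 → c = 0 := by
    intro c hc
    set w : Fin (n + 1) → ℝ := Fin.cons (-(∑ j, c j)) c with hw
    have hwsum : ∑ i, w i = 0 := by simp [hw, Fin.sum_univ_succ]
    have hwv : ∑ i, w i • v xbar i = 0 := by
      rw [Fin.sum_univ_succ]
      have h1 : ∀ j : Fin n, w j.succ • v xbar j.succ = c j • d xbar j + c j • v xbar 0 := by
        intro j
        rw [hw]
        simp [hd, smul_sub]
      rw [Finset.sum_congr rfl fun j _ => h1 j, Finset.sum_add_distrib, hc, ← Finset.sum_smul]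
      simp [hw]
    funext j
    have := affineIndependent_iff.1 hindep Finset.univ w hwsum hwv j.succ (Finset.mem_univ _)
    simpa [hw] using this
  have hdet : (G xbar).det ≠ 0 := by
    refine Matrix.separatingLeft_iff_det_ne_zero.1 (Matrix.separatingLeft_def.2 ?_)
    intro c hc
    have h0 : ∑ j, c j • d xbar j = 0 := by
      have := hc c
      rw [hdot] at this
      exact inner_self_eq_zero.1 this
    exact hdind c h0
  have hsolve : ∀ x : E, (G x).det ≠ 0 → (G x).mulVec (μ x) = bb x := by
    intro x hx
    rw [hμ]
    show (G x).mulVec (((G x).det)⁻¹ • ((G x).adjugate.mulVec (bb x))) = bb x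
    rw [Matrix.mulVec_smul, Matrix.mulVec_mulVec, Matrix.mul_adjugate, Matrix.smul_mulVec,
      Matrix.one_mulVec, smul_smul, inv_mul_cancel₀ hx, one_smul]
  have hqd : ∀ x : E, (G x).det ≠ 0 → ∀ k, ⟪∑ i, lam x i • v x i, d x k⟫ = 0 := by
    intro x hx k
    rw [hrepr (lam x) x (hlamsum x)]
    have hsucc : ∑ j, lam x j.succ • d x j = ∑ j, μ x j • d x j :=
      Finset.sum_congr rfl fun j _ => by rw [hlamsucc]
    rw [hsucc, inner_add_left, sum_inner]
    have h2 : ∑ j, ⟪μ x j • d x j, d x k⟫ = ((G x).mulVec (μ x)) k := by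
      simp only [Matrix.mulVec, dotProduct, Matrix.of_apply, real_inner_smul_left, hG]
      exact Finset.sum_congr rfl fun j _ => by rw [real_inner_comm]; ring
    rw [h2, hsolve x hx, hbb]
    simp
  obtain ⟨lb, hlb_pos, hlb_sum, hlb_eq⟩ := pos_coords_of_mem_intrinsicInterior hindep hrelint
  have hqbar : ∑ i, lam xbar i • v xbar i = 0 := by
    have h1 := hrepr (lam xbar) xbar (hlamsum xbar)
    have h2 := hrepr lb xbar hlb_sum
    rw [hlb_eq] at h2
    have hdiff : ∑ i, lam xbar i • v xbar i
        = ∑ j, (lam xbar j.succ - lb j.succ) • d xbar j := by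
      calc ∑ i, lam xbar i • v xbar i
          = (v xbar 0 + ∑ j, lam xbar j.succ • d xbar j)
            - (v xbar 0 + ∑ j, lb j.succ • d xbar j) := by
            rw [← h1, ← h2, sub_zero]
        _ = ∑ j, lam xbar j.succ • d xbar j - ∑ j, lb j.succ • d xbar j := by abel
        _ = ∑ j, (lam xbar j.succ - lb j.succ) • d xbar j := by
            rw [← Finset.sum_sub_distrib]
            exact Finset.sum_congr rfl fun j _ => (sub_smul _ _ _).symm
    have hz : ⟪∑ i, lam xbar i • v xbar i, ∑ i, lam xbar i • v xbar i⟫ = 0 := by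
      nth_rewrite 1 [hdiff]
      rw [sum_inner]
      refine Finset.sum_eq_zero fun j _ => ?_
      rw [real_inner_smul_left, real_inner_comm, hqd xbar hdet j, mul_zero]
    exact inner_self_eq_zero.1 hz
  have hlam_bar : lam xbar = lb :=
    coords_unique hindep (hlamsum xbar) hlb_sum (by rw [hqbar, hlb_eq])
  have hdc : ∀ j : Fin n, Continuous fun x => d x j := fun j => (hvc j.succ).sub (hvc 0)
  have hGc : Continuous G := continuous_matrix fun i j => (hdc i).inner (hdc j)
  have hdetc : Continuous fun x => (G x).det := hGc.matrix_det
  have hbbc : Continuous bb := continuous_pi fun j => ((hvc 0).inner (hdc j)).neg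
  have hμc : ContinuousAt μ xbar := by
    have h1 : ContinuousAt (fun x => ((G x).det)⁻¹) xbar := hdetc.continuousAt.inv₀ hdet
    have h2 : Continuous fun x => (G x).adjugate.mulVec (bb x) := hGc.matrix_adjugate.matrix_mulVec hbbc
    exact h1.smul h2.continuousAt
  have hlamc : ∀ k, ContinuousAt (fun x => lam x k) xbar := by
    intro k
    refine Fin.cases ?_ ?_ k
    · have hsc : ContinuousAt (fun x => ∑ j, μ x j) xbar :=
        tendsto_finset_sum Finset.univ fun j _ => (continuous_apply j).continuousAt.comp hμc
      have h00 : ContinuousAt (fun x => 1 - ∑ j : Fin n, μ x j) xbar :=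
        ContinuousAt.sub continuousAt_const hsc
      simp only [hlam, Fin.cons_zero]
      exact h00
    · intro j
      simp only [hlam, Fin.cons_succ]
      exact (continuous_apply j).continuousAt.comp hμc
  have h1ev : ∀ᶠ x in 𝓝 xbar, (G x).det ≠ 0 := hdetc.continuousAt.eventually_ne hdet
  have h2ev : ∀ᶠ x in 𝓝 xbar, ∀ k, 0 < lam x k := by
    rw [eventually_all]
    intro k
    have hpos : 0 < lam xbar k := by rw [hlam_bar]; exact hlb_pos k
    exact (hlamc k).eventually (eventually_gt_nhds hpos)
  obtain ⟨ε, hε, hball⟩ := Metric.eventually_nhds_iff.1 (h1ev.and h2ev)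
  refine ⟨ε / 2, by positivity, fun x hx => ?_⟩
  have hx' : dist x xbar < ε := by rw [dist_eq_norm]; linarith
  obtain ⟨hdx, hpos⟩ := hball hx'
  refine ⟨lam x, hpos, hlamsum x, fun k => ?_⟩
  refine Fin.cases ?_ ?_ k
  · simp
  · intro j
    exact hqd x hdx j

theorem stmt15 (f : E → ℝ) (hf : LocallyLipschitz f) (xbar : E) {n : ℕ}
    (F : Fin (n + 1) → E → ℝ) (hF : IsStrongC2MaxAt f xbar F) :
    ∃ δ > 0, ∀ x : E, (∀ i j, F i x = F j x) → ‖x - xbar‖ ≤ δ →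
      ∃ p : E,
        (∀ i, (Submodule.orthogonalProjectionOnto (tangentSpaceOf fun i => gradient (F i) x)
            (gradient (F i) x) : E) = p) ∧
        p ∈ convexHull ℝ (Set.range fun i => gradient (F i) x) ∧
        (∀ w ∈ convexHull ℝ (Set.range fun i => gradient (F i) x), ‖p‖ ≤ ‖w‖) ∧
        (∀ w ∈ convexHull ℝ (Set.range fun i => gradient (F i) x),
          (∀ u ∈ convexHull ℝ (Set.range fun i => gradient (F i) x), ‖w‖ ≤ ‖u‖) →
          w = p) ∧
        p = minNorm (convexHull ℝ (Set.range fun i => gradient (F i) x)) := by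
  classical
  obtain ⟨hC2, -, -, hindep, hrelint, -⟩ := hF
  have hvcont : ∀ i, Continuous fun x => gradient (F i) x := by
    intro i
    have h1 : Continuous fun x => fderiv ℝ (F i) x := (hC2 i).continuous_fderiv (by norm_num)
    exact (InnerProductSpace.toDual ℝ E).symm.continuous.comp h1
  obtain ⟨δ, hδ, hkey⟩ := key (fun x i => gradient (F i) x) hvcont xbar hindep hrelint
  refine ⟨δ, hδ, fun x hM hx => ?_⟩
  obtain ⟨lam, hpos, hsum, horth0⟩ := hkey x hx
  set g : Fin (n + 1) → E := fun i => gradient (F i) x with hg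
  set p : E := ∑ i, lam i • g i with hp
  have horth : ∀ i j, ⟪p, g i - g j⟫ = 0 := by
    intro i j
    have hij : g i - g j = (g i - g 0) - (g j - g 0) := by abel
    rw [hij, inner_sub_right, horth0 i, horth0 j, sub_zero]
  have hmemT : p ∈ tangentSpaceOf g := horth
  have hhull : p ∈ convexHull ℝ (Set.range g) :=
    mem_convexHull_of_exists_fintype lam g (fun i => (hpos i).le) hsum
      (fun i => Set.mem_range_self i) rfl
  have hviq : ∀ i, g i - p = ∑ j, lam j • (g i - g j) := by
    intro i
    calc g i - p = (∑ j, lam j • g i) - ∑ j, lam j • g j := by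
          rw [← Finset.sum_smul, hsum, one_smul, hp]
      _ = ∑ j, (lam j • g i - lam j • g j) := by rw [Finset.sum_sub_distrib]
      _ = ∑ j, lam j • (g i - g j) :=
          Finset.sum_congr rfl fun j _ => (smul_sub _ _ _).symm
  have hproj : ∀ i, (Submodule.orthogonalProjectionOnto (tangentSpaceOf g) (g i) : E) = p := by
    intro i
    rw [← Submodule.starProjection_apply]
    refine Submodule.eq_starProjection_of_mem_of_inner_eq_zero hmemT ?_
    intro w hw
    have hw' : ∀ a b, ⟪w, g a - g b⟫ = 0 := hw
    rw [hviq i, sum_inner]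
    refine Finset.sum_eq_zero fun j _ => ?_
    rw [real_inner_smul_left, real_inner_comm, hw' i j, mul_zero]
  have hkey2 : ∀ w ∈ convexHull ℝ (Set.range g), ‖w‖ ^ 2 = ‖p‖ ^ 2 + ‖w - p‖ ^ 2 := by
    intro w hw
    obtain ⟨c, hc0, hc1, hcv⟩ := convexHull_range_coords g hw
    have hwp : w - p = ∑ i, (c i - lam i) • (g i - g 0) := by
      have hsum0 : ∑ i, (c i - lam i) = 0 := by
        rw [Finset.sum_sub_distrib, hc1, hsum, sub_self]
      calc w - p = ∑ i, (c i - lam i) • g i := by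
            rw [hp, ← hcv, ← Finset.sum_sub_distrib]
            exact Finset.sum_congr rfl fun i _ => (sub_smul _ _ _).symm
        _ = ∑ i, (c i - lam i) • (g i - g 0) := by
            rw [Finset.sum_congr rfl fun i _ => smul_sub (c i - lam i) (g i) (g 0),
              Finset.sum_sub_distrib, ← Finset.sum_smul, hsum0, zero_smul, sub_zero]
    have hip : ⟪p, w - p⟫ = 0 := by
      rw [hwp, inner_sum]
      refine Finset.sum_eq_zero fun i _ => ?_
      rw [real_inner_smul_right, horth0 i, mul_zero]
    calc ‖w‖ ^ 2 = ‖p + (w - p)‖ ^ 2 := by rw [add_sub_cancel]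
      _ = ‖p‖ ^ 2 + 2 * ⟪p, w - p⟫ + ‖w - p‖ ^ 2 := norm_add_sq_real p (w - p)
      _ = ‖p‖ ^ 2 + ‖w - p‖ ^ 2 := by rw [hip]; ring
  have hmin : ∀ w ∈ convexHull ℝ (Set.range g), ‖p‖ ≤ ‖w‖ := by
    intro w hw
    have h2 := hkey2 w hw
    nlinarith [norm_nonneg w, norm_nonneg p, sq_nonneg ‖w - p‖]
  have huniq : ∀ w ∈ convexHull ℝ (Set.range g),
      (∀ u ∈ convexHull ℝ (Set.range g), ‖w‖ ≤ ‖u‖) → w = p := by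
    intro w hw hminw
    have h2 := hkey2 w hw
    have h3 : ‖p‖ ≤ ‖w‖ := hmin w hw
    have h4 : ‖w‖ ≤ ‖p‖ := hminw p hhull
    have he : ‖w‖ = ‖p‖ := le_antisymm h4 h3
    rw [he] at h2
    have h5 : ‖w - p‖ ^ 2 = 0 := by linarith
    have h6 : w - p = 0 := by
      have := pow_eq_zero_iff (n := 2) (by norm_num) |>.1 h5
      exact norm_eq_zero.1 this
    exact sub_eq_zero.1 h6
  refine ⟨p, hproj, hhull, hmin, huniq, ?_⟩
  have hex : ∃ v0, v0 ∈ convexHull ℝ (Set.range g) ∧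
      ∀ w ∈ convexHull ℝ (Set.range g), ‖v0‖ ≤ ‖w‖ := ⟨p, hhull, hmin⟩
  have hmn : minNorm (convexHull ℝ (Set.range g)) = p := by
    simp only [minNorm]
    rw [dif_pos hex]
    exact huniq _ hex.choose_spec.1 hex.choose_spec.2
  exact hmn.symm
end

section
/- Let β > 0 and κ > 0, and define φ : (0, e^κ) → ℝ by φ(t) = t / (β·(κ − log t)), where log is the natural logarithm. Then φ is a continuous, strictly increasing bijection from (0, e^κ) onto (0, +∞), and its inverse φ⁻¹ : (0, +∞) → (0, e^κ) satisfies lim_{s → +∞} (s / log s) · φ⁻¹(1/s) = β; consequently φ⁻¹(1/s) = O((log s)/s) as s → ∞. -/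
open Filter Topology Metric Set
open scoped Classical

variable {E : Type*} [NormedAddCommGroup E] [InnerProductSpace ℝ E] [FiniteDimensional ℝ E]

namespace Stmt19Aux
variable {β κ : ℝ}

variable {β κ : ℝ}

lemma denom_pos (hβ : 0 < β) {t : ℝ} (ht0 : 0 < t) (ht : t < Real.exp κ) :
    0 < β * (κ - Real.log t) := by
  have : Real.log t < κ := (Real.log_lt_iff_lt_exp ht0).2 ht
  have := sub_pos.2 this
  positivity

lemma phi_pos (hβ : 0 < β) {t : ℝ} (ht : t ∈ Ioo 0 (Real.exp κ)) :
    0 < t / (β * (κ - Real.log t)) :=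
  div_pos ht.1 (denom_pos hβ ht.1 ht.2)

lemma phi_cont (hβ : 0 < β) :
    ContinuousOn (fun t : ℝ => t / (β * (κ - Real.log t))) (Ioo 0 (Real.exp κ)) := by
  apply ContinuousOn.div continuousOn_id
  · exact (continuousOn_const.mul (continuousOn_const.sub
      (Real.continuousOn_log.mono (fun t ht => ne_of_gt ht.1))))
  · exact fun t ht => ne_of_gt (denom_pos hβ ht.1 ht.2)

lemma phi_mono (hβ : 0 < β) :
    StrictMonoOn (fun t : ℝ => t / (β * (κ - Real.log t))) (Ioo 0 (Real.exp κ)) := by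
  intro a ha b hb hab
  have hDa := denom_pos hβ ha.1 ha.2
  have hDb := denom_pos hβ hb.1 hb.2
  have hlog : Real.log a < Real.log b := Real.log_lt_log ha.1 hab
  have hA : 0 < κ - Real.log a := by nlinarith
  have hB : 0 < κ - Real.log b := by nlinarith
  rw [div_lt_div_iff₀ hDa hDb]
  nlinarith [mul_pos hb.1 (sub_pos.2 hlog), mul_pos (sub_pos.2 hab) hB]

lemma phi_surj (hβ : 0 < β) (hκ : 0 < κ) :
    SurjOn (fun t : ℝ => t / (β * (κ - Real.log t))) (Ioo 0 (Real.exp κ)) (Ioi 0) := by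
  intro s hs
  have hs0 : (0:ℝ) < s := hs
  -- small point t₀ with φ t₀ < s
  set t₀ : ℝ := min (s * β * κ / 2) (min 1 (Real.exp κ / 2)) with ht₀def
  have ht₀pos : 0 < t₀ :=
    lt_min (by positivity) (lt_min one_pos (by positivity))
  have ht₀lt : t₀ < Real.exp κ :=
    lt_of_le_of_lt ((min_le_right _ _).trans (min_le_right _ _)) (by linarith [Real.exp_pos κ])
  have ht₀mem : t₀ ∈ Ioo 0 (Real.exp κ) := ⟨ht₀pos, ht₀lt⟩
  have hlog₀ : Real.log t₀ ≤ 0 :=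
    Real.log_nonpos (le_of_lt ht₀pos) ((min_le_right _ _).trans (min_le_left _ _))
  have hφ₀ : t₀ / (β * (κ - Real.log t₀)) < s := by
    have h1 : β * κ ≤ β * (κ - Real.log t₀) := by nlinarith
    have h2 : t₀ / (β * (κ - Real.log t₀)) ≤ t₀ / (β * κ) := by
      apply div_le_div_of_nonneg_left (le_of_lt ht₀pos) (by positivity) h1
    have h3 : t₀ / (β * κ) ≤ (s * β * κ / 2) / (β * κ) := by
      gcongr
      exact min_le_left _ _
    have h4 : (s * β * κ / 2) / (β * κ) = s / 2 := by field_simp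
    linarith
  -- large point t₁ with φ t₁ > s
  obtain ⟨δ, hδpos, hδκ, hδ1, hδbig⟩ : ∃ δ : ℝ, 0 < δ ∧ δ < κ ∧ δ ≤ 1 ∧
      Real.exp (κ - 1) / (β * δ) > s := by
    refine ⟨min (1/2) (min (κ/2) (Real.exp (κ-1) / (β * (s+1)) / 2)), ?_, ?_, ?_, ?_⟩
    · positivity
    · exact lt_of_le_of_lt ((min_le_right _ _).trans (min_le_left _ _)) (by linarith)
    · exact (min_le_left _ _).trans (by norm_num)
    · set δ := min (1/2) (min (κ/2) (Real.exp (κ-1) / (β * (s+1)) / 2)) with hδ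
      have hδpos : 0 < δ := by positivity
      have hδle : δ ≤ Real.exp (κ-1) / (β * (s+1)) / 2 :=
        (min_le_right _ _).trans (min_le_right _ _)
      have hbd : β * δ ≤ Real.exp (κ-1) / (s+1) / 2 := by
        have heq : β * (Real.exp (κ-1) / (β * (s+1)) / 2) = Real.exp (κ-1) / (s+1) / 2 := by
          field_simp
        calc β * δ ≤ β * (Real.exp (κ-1) / (β * (s+1)) / 2) := by gcongr
        _ = _ := heq
      have h2 : Real.exp (κ-1) / (Real.exp (κ-1) / (s+1) / 2) ≤ Real.exp (κ-1) / (β*δ) := by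
        gcongr <;> positivity
      have h3 : Real.exp (κ-1) / (Real.exp (κ-1) / (s+1) / 2) = 2*(s+1) := by
        rw [div_eq_iff (by positivity)]
        field_simp
      rw [h3] at h2
      linarith
  set t₁ : ℝ := Real.exp (κ - δ) with ht₁def
  have ht₁mem : t₁ ∈ Ioo 0 (Real.exp κ) :=
    ⟨Real.exp_pos _, Real.exp_lt_exp.2 (by linarith)⟩
  have hlog₁ : Real.log t₁ = κ - δ := Real.log_exp _
  have hφ₁ : s < t₁ / (β * (κ - Real.log t₁)) := by
    rw [hlog₁]
    have : κ - (κ - δ) = δ := by ring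
    rw [this]
    have hge : Real.exp (κ - 1) ≤ t₁ := Real.exp_le_exp.2 (by linarith)
    calc s < Real.exp (κ-1) / (β * δ) := hδbig
    _ ≤ t₁ / (β * δ) := by gcongr
  -- IVT
  have hord : t₀ < t₁ := by
    by_contra h
    push_neg at h
    rcases eq_or_lt_of_le h with h | h
    · rw [h] at hφ₁; linarith
    · have := phi_mono hβ ht₁mem ht₀mem h
      simp only at this
      linarith
  have hsub : Icc t₀ t₁ ⊆ Ioo 0 (Real.exp κ) := fun x hx =>
    ⟨lt_of_lt_of_le ht₀pos hx.1, lt_of_le_of_lt hx.2 ht₁mem.2⟩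
  have hivt := intermediate_value_Icc (le_of_lt hord)
    ((phi_cont hβ (κ := κ)).mono hsub)
  have hmem : s ∈ Icc (t₀ / (β * (κ - Real.log t₀))) (t₁ / (β * (κ - Real.log t₁))) :=
    ⟨le_of_lt hφ₀, le_of_lt hφ₁⟩
  obtain ⟨t, ht, hts⟩ := hivt hmem
  exact ⟨t, hsub ht, hts⟩

lemma phi_bijOn (hβ : 0 < β) (hκ : 0 < κ) :
    Set.BijOn (fun t : ℝ => t / (β * (κ - Real.log t))) (Set.Ioo 0 (Real.exp κ))
      (Set.Ioi 0) :=
  ⟨fun t ht => phi_pos hβ ht, (phi_mono hβ).injOn, phi_surj hβ hκ⟩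

noncomputable def psiAux (β κ : ℝ) : ℝ → ℝ :=
  Function.invFunOn (fun t : ℝ => t / (β * (κ - Real.log t))) (Set.Ioo 0 (Real.exp κ))

lemma psi_invOn (hβ : 0 < β) (hκ : 0 < κ) :
    Set.InvOn (psiAux β κ) (fun t : ℝ => t / (β * (κ - Real.log t)))
      (Set.Ioo 0 (Real.exp κ)) (Set.Ioi 0) :=
  (phi_bijOn hβ hκ).invOn_invFunOn

lemma psi_bijOn (hβ : 0 < β) (hκ : 0 < κ) :
    Set.BijOn (psiAux β κ) (Set.Ioi 0) (Set.Ioo 0 (Real.exp κ)) :=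
  Set.BijOn.symm (psi_invOn hβ hκ).symm (phi_bijOn hβ hκ)

lemma psi_mem (hβ : 0 < β) (hκ : 0 < κ) {s : ℝ} (hs : 0 < s) :
    psiAux β κ s ∈ Set.Ioo 0 (Real.exp κ) :=
  (psi_bijOn hβ hκ).mapsTo hs

lemma psi_left (hβ : 0 < β) (hκ : 0 < κ) {t : ℝ} (ht : t ∈ Set.Ioo 0 (Real.exp κ)) :
    psiAux β κ (t / (β * (κ - Real.log t))) = t :=
  (psi_invOn hβ hκ).1 ht

lemma psi_right (hβ : 0 < β) (hκ : 0 < κ) {s : ℝ} (hs : 0 < s) :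
    psiAux β κ s / (β * (κ - Real.log (psiAux β κ s))) = s :=
  (psi_invOn hβ hκ).2 hs

lemma psi_tendsto_zero (hβ : 0 < β) (hκ : 0 < κ) :
    Tendsto (fun s : ℝ => psiAux β κ (1/s)) atTop (𝓝 0) := by
  rw [tendsto_order]
  constructor
  · intro a ha
    filter_upwards [eventually_gt_atTop 0] with s hs
    exact lt_trans ha (psi_mem hβ hκ (by positivity)).1
  · intro a ha
    set a' : ℝ := min (a/2) (Real.exp κ / 2) with ha'def
    have ha'mem : a' ∈ Set.Ioo 0 (Real.exp κ) :=
      ⟨lt_min (by linarith) (by positivity),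
       (min_le_right _ _).trans_lt (by linarith [Real.exp_pos κ])⟩
    have hφa' : 0 < a' / (β * (κ - Real.log a')) := phi_pos hβ ha'mem
    filter_upwards [eventually_gt_atTop (max 1 (1 / (a' / (β * (κ - Real.log a')))))]
      with s hs
    have hs0 : (0:ℝ) < s := lt_trans one_pos (lt_of_le_of_lt (le_max_left _ _) hs)
    have h1 : 1 / (a' / (β * (κ - Real.log a'))) < s := lt_of_le_of_lt (le_max_right _ _) hs
    have h1s : 1/s < a' / (β * (κ - Real.log a')) := by
      rw [div_lt_iff₀ hs0]
      rw [div_lt_iff₀ hφa'] at h1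
      nlinarith
    have hmem : psiAux β κ (1/s) ∈ Set.Ioo 0 (Real.exp κ) := psi_mem hβ hκ (by positivity)
    by_contra hcon
    push_neg at hcon
    have ha'lt : a' < psiAux β κ (1/s) :=
      lt_of_lt_of_le (lt_of_le_of_lt (min_le_left _ _) (by linarith)) hcon
    have hmono := phi_mono hβ ha'mem hmem ha'lt
    simp only at hmono
    rw [psi_right hβ hκ (by positivity : (0:ℝ) < 1/s)] at hmono
    linarith

lemma psi_x_tendsto (hβ : 0 < β) (hκ : 0 < κ) :
    Tendsto (fun s : ℝ => -Real.log (psiAux β κ (1/s))) atTop atTop := by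
  have h1 : Tendsto (fun s : ℝ => psiAux β κ (1/s)) atTop (𝓝[>] 0) := by
    apply tendsto_nhdsWithin_of_tendsto_nhds_of_eventually_within _ (psi_tendsto_zero hβ hκ)
    filter_upwards [eventually_gt_atTop 0] with s hs
    exact (psi_mem hβ hκ (by positivity)).1
  exact tendsto_neg_atBot_atTop.comp (Real.tendsto_log_nhdsGT_zero.comp h1)

lemma g_tendsto (hβ : 0 < β) (hκ : 0 < κ) :
    Tendsto (fun y : ℝ => β * (κ + y) / (y + Real.log (κ + y) + Real.log β))
      atTop (𝓝 β) := by
  have h1 : Tendsto (fun z : ℝ => Real.log z / z) atTop (𝓝 0) :=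
    Real.isLittleO_log_id_atTop.tendsto_div_nhds_zero
  have h2 : Tendsto (fun z : ℝ => (Real.log β - κ) / z) atTop (𝓝 0) :=
    tendsto_const_nhds.div_atTop tendsto_id
  have hden : Tendsto (fun z : ℝ => 1 + (Real.log z / z + (Real.log β - κ) / z))
      atTop (𝓝 1) := by
    simpa using (tendsto_const_nhds : Tendsto (fun _ : ℝ => (1:ℝ)) atTop (𝓝 1)).add (h1.add h2)
  have hratio : Tendsto (fun z : ℝ => z / (z + Real.log z + (Real.log β - κ)))
      atTop (𝓝 1) := by
    have hinv : Tendsto (fun z : ℝ => (1 + (Real.log z / z + (Real.log β - κ) / z))⁻¹)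
        atTop (𝓝 1) := by
      have := hden.inv₀ one_ne_zero
      simpa using this
    apply hinv.congr'
    filter_upwards [eventually_gt_atTop 0] with z hz
    have hzne : z ≠ 0 := ne_of_gt hz
    field_simp
    congr 1
    ring
  have hcomp : Tendsto (fun y : ℝ => (κ + y) / ((κ + y) + Real.log (κ + y) + (Real.log β - κ)))
      atTop (𝓝 1) := hratio.comp (tendsto_atTop_add_const_left _ κ tendsto_id)
  have := hcomp.const_mul β
  simp only [mul_one] at this
  apply this.congr
  intro y
  have : κ + y + Real.log (κ + y) + (Real.log β - κ) = y + Real.log (κ + y) + Real.log β := by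
    ring
  rw [this, mul_div_assoc]

lemma psi_main_tendsto (hβ : 0 < β) (hκ : 0 < κ) :
    Tendsto (fun s : ℝ => s / Real.log s * psiAux β κ (1 / s)) atTop (𝓝 β) := by
  have hcomp := (g_tendsto hβ hκ).comp (psi_x_tendsto hβ hκ)
  apply hcomp.congr'
  filter_upwards [eventually_gt_atTop 1] with s hs1
  have hs0 : (0:ℝ) < s := lt_trans one_pos hs1
  have h1s : (0:ℝ) < 1/s := by positivity
  set u : ℝ := psiAux β κ (1/s) with hu
  have humem : u ∈ Set.Ioo 0 (Real.exp κ) := psi_mem hβ hκ h1s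
  have hk : 0 < κ - Real.log u :=
    sub_pos.2 ((Real.log_lt_iff_lt_exp humem.1).2 humem.2)
  have hD : 0 < β * (κ - Real.log u) := by positivity
  have heq : u / (β * (κ - Real.log u)) = 1/s := psi_right hβ hκ h1s
  have hsu : s * u = β * (κ - Real.log u) := by
    rw [div_eq_div_iff hD.ne' hs0.ne'] at heq
    linarith
  have hlogs : Real.log s = Real.log β + Real.log (κ - Real.log u) + -Real.log u := by
    have hlm : Real.log (s * u) = Real.log s + Real.log u :=
      Real.log_mul (ne_of_gt hs0) (ne_of_gt humem.1)
    have hlm2 : Real.log (β * (κ - Real.log u)) = Real.log β + Real.log (κ - Real.log u) :=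
      Real.log_mul (ne_of_gt hβ) (ne_of_gt hk)
    rw [hsu, hlm2] at hlm
    linarith
  show β * (κ + -Real.log u) / (-Real.log u + Real.log (κ + -Real.log u) + Real.log β)
      = s / Real.log s * u
  have e1 : κ + -Real.log u = κ - Real.log u := by ring
  have e2 : -Real.log u + Real.log (κ - Real.log u) + Real.log β = Real.log s := by
    rw [hlogs]; ring
  rw [e1, e2, div_mul_eq_mul_div, hsu]

open Asymptotics in
lemma psi_bigO (hβ : 0 < β) (hκ : 0 < κ) :
    (fun s : ℝ => psiAux β κ (1 / s)) =O[atTop] fun s : ℝ => Real.log s / s := by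
  have h1 : (fun s : ℝ => s / Real.log s * psiAux β κ (1/s)) =O[atTop]
      (fun _ : ℝ => (1:ℝ)) := (psi_main_tendsto hβ hκ).isBigO_one ℝ
  have h2 := h1.mul (isBigO_refl (fun s : ℝ => Real.log s / s) atTop)
  apply h2.congr'
  · filter_upwards [eventually_gt_atTop 1] with s hs1
    have hs0 : (0:ℝ) < s := lt_trans one_pos hs1
    have hL : 0 < Real.log s := Real.log_pos hs1
    field_simp
  · filter_upwards with s
    simp

end Stmt19Aux

open Stmt19Aux Asymptotics in
theorem stmt19 (β κ : ℝ) (hβ : 0 < β) (hκ : 0 < κ) :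
    ContinuousOn (fun t : ℝ => t / (β * (κ - Real.log t))) (Set.Ioo 0 (Real.exp κ)) ∧
    StrictMonoOn (fun t : ℝ => t / (β * (κ - Real.log t))) (Set.Ioo 0 (Real.exp κ)) ∧
    Set.BijOn (fun t : ℝ => t / (β * (κ - Real.log t))) (Set.Ioo 0 (Real.exp κ))
      (Set.Ioi 0) ∧
    ∃ ψ : ℝ → ℝ,
      Set.BijOn ψ (Set.Ioi 0) (Set.Ioo 0 (Real.exp κ)) ∧
      (∀ t ∈ Set.Ioo 0 (Real.exp κ), ψ (t / (β * (κ - Real.log t))) = t) ∧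
      (∀ s ∈ Set.Ioi (0 : ℝ), ψ s / (β * (κ - Real.log (ψ s))) = s) ∧
      Tendsto (fun s : ℝ => s / Real.log s * ψ (1 / s)) atTop (𝓝 β) ∧
      (fun s : ℝ => ψ (1 / s)) =O[atTop] fun s : ℝ => Real.log s / s :=
  ⟨phi_cont hβ, phi_mono hβ, phi_bijOn hβ hκ, psiAux β κ, psi_bijOn hβ hκ,
    fun t ht => psi_left hβ hκ ht, fun s hs => psi_right hβ hκ hs,
    psi_main_tendsto hβ hκ, psi_bigO hβ hκ⟩
end
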